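/- Let λ₀ ≥ 0 and let f, g : [λ₀, ∞) → (0, ∞) be continuous functions such that f is strictly decreasing with f(λ) → 0 as λ → ∞ and g is strictly increasing with g(λ) → +∞ as λ → ∞. Let Ψ₀ be a concave index function and let c > 0 be a constant. Define Θ(λ) := c·f(λ)²/g(λ) for λ ≥ λ₀ and Ψ(t) := inf_{λ ≥ λ₀} ( g(λ)·Ψ₀(t) + c·f(λ)² ) for t > 0. Then Θ is a continuous, strictly decreasing bijection from [λ₀,∞) onto (0, Θ(λ₀)], and for every δ > 0 with Ψ₀(δ) ≤ Θ(λ₀) one has Ψ(δ) ≤ 2c·f(Θ⁻¹(Ψ₀(δ)))². In particular, Ψ(δ) → 0 as δ → 0⁺. -/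

import Mathlib

open Set Filter

/-- decay rate of `Ψ(t) = inf_{λ ≥ λ₀} ( g(λ)·Ψ₀(t) + c·f(λ)² )`.
The function `Θ(λ) = c·f(λ)²/g(λ)` is a continuous strictly decreasing bijection
from `[λ₀,∞)` onto `(0, Θ(λ₀)]`, and for `δ > 0` with `Ψ₀(δ) ≤ Θ(λ₀)` one has
`Ψ(δ) ≤ 2c·f(Θ⁻¹(Ψ₀(δ)))²` (stated via the unique preimage); in particular
`Ψ(δ) → 0` as `δ → 0⁺`. -/
theorem stmt_2 (lam0 : ℝ) (hlam0 : 0 ≤ lam0)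
    (f g : ℝ → ℝ)
    (hfpos : ∀ l, lam0 ≤ l → 0 < f l) (hgpos : ∀ l, lam0 ≤ l → 0 < g l)
    (hfcont : ContinuousOn f (Ici lam0)) (hgcont : ContinuousOn g (Ici lam0))
    (hfanti : StrictAntiOn f (Ici lam0)) (hflim : Tendsto f atTop (nhds 0))
    (hgmono : StrictMonoOn g (Ici lam0)) (hglim : Tendsto g atTop atTop)
    -- Ψ₀ is a concave index function
    (Ψ₀ : ℝ → ℝ)
    (hΨ₀pos : ∀ t, 0 < t → 0 < Ψ₀ t)
    (hΨ₀cont : ContinuousOn Ψ₀ (Ioi 0))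
    (hΨ₀mono : StrictMonoOn Ψ₀ (Ioi 0))
    (hΨ₀lim : Tendsto Ψ₀ (nhdsWithin 0 (Ioi 0)) (nhds 0))
    (hΨ₀conc : ConcaveOn ℝ (Ioi 0) Ψ₀)
    (c : ℝ) (hc : 0 < c)
    (Θ : ℝ → ℝ) (hΘ : ∀ l, lam0 ≤ l → Θ l = c * f l ^ 2 / g l)
    (Ψ : ℝ → ℝ)
    (hΨ : ∀ t, Ψ t = sInf ((fun l => g l * Ψ₀ t + c * f l ^ 2) '' Ici lam0)) :
    ContinuousOn Θ (Ici lam0) ∧ StrictAntiOn Θ (Ici lam0) ∧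
      BijOn Θ (Ici lam0) (Ioc 0 (Θ lam0)) ∧
      (∀ δ, 0 < δ → Ψ₀ δ ≤ Θ lam0 →
        ∀ l, lam0 ≤ l → Θ l = Ψ₀ δ → Ψ δ ≤ 2 * c * f l ^ 2) ∧
      Tendsto Ψ (nhdsWithin 0 (Ioi 0)) (nhds 0) := by
  -- basic facts
  have hΘpos : ∀ l, lam0 ≤ l → 0 < Θ l := by
    intro l hl
    rw [hΘ l hl]
    have := hfpos l hl
    exact div_pos (by positivity) (hgpos l hl)
  have hcont : ContinuousOn Θ (Ici lam0) := by
    apply ContinuousOn.congr (f := fun l => c * f l ^ 2 / g l)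
    · exact (continuousOn_const.mul (hfcont.pow 2)).div hgcont (fun l hl => (hgpos l hl).ne')
    · intro l hl; exact hΘ l hl
  have hanti : StrictAntiOn Θ (Ici lam0) := by
    intro a ha b hb hab
    rw [hΘ a ha, hΘ b hb]
    have hfb := hfpos b hb
    have h1 : c * f b ^ 2 < c * f a ^ 2 := by
      have h := hfanti ha hb hab
      exact mul_lt_mul_of_pos_left (by nlinarith) hc
    exact div_lt_div₀ h1 (le_of_lt (hgmono ha hb hab)) (by positivity) (hgpos a ha)
  -- c * f ^ 2 tends to 0
  have hcf2 : Tendsto (fun l => c * f l ^ 2) atTop (nhds 0) := by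
    have h2 : Tendsto (fun l => f l ^ 2) atTop (nhds 0) := by
      have := hflim.pow 2
      simpa using this
    simpa using h2.const_mul c
  have hΘlim : Tendsto Θ atTop (nhds 0) := by
    apply squeeze_zero' (g := fun l => c * f l ^ 2 / g lam0)
    · filter_upwards [eventually_ge_atTop lam0] with l hl
      exact (hΘpos l hl).le
    · filter_upwards [eventually_ge_atTop lam0] with l hl
      rw [hΘ l hl]
      apply div_le_div_of_nonneg_left (by positivity) (hgpos lam0 le_rfl)
      rcases eq_or_lt_of_le hl with h|h
      · rw [h]
      · exact (hgmono (le_refl lam0 : lam0 ∈ Ici lam0) hl h).le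
    · simpa using hcf2.div_const (g lam0)
  have hbij : BijOn Θ (Ici lam0) (Ioc 0 (Θ lam0)) := by
    refine ⟨?_, hanti.injOn, ?_⟩
    · intro l hl
      refine ⟨hΘpos l hl, ?_⟩
      rcases eq_or_lt_of_le (mem_Ici.mp hl) with h|h
      · rw [← h]
      · exact (hanti (le_refl lam0 : lam0 ∈ Ici lam0) hl h).le
    · intro y hy
      obtain ⟨hy0, hyle⟩ := hy
      obtain ⟨M, hM1, hM2⟩ : ∃ M, lam0 ≤ M ∧ Θ M < y := by
        have := (hΘlim.eventually_lt_const hy0).and (eventually_ge_atTop lam0)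
        obtain ⟨M, h1, h2⟩ := this.exists
        exact ⟨M, h2, h1⟩
      have hsub : Icc (Θ M) (Θ lam0) ⊆ Θ '' Icc lam0 M :=
        intermediate_value_Icc' hM1 (hcont.mono (Icc_subset_Ici_self))
      obtain ⟨x, hx, hxy⟩ := hsub ⟨hM2.le, hyle⟩
      exact ⟨x, hx.1, hxy⟩
  -- facts about Ψ
  have hbdd : ∀ t, 0 < t → BddBelow ((fun l => g l * Ψ₀ t + c * f l ^ 2) '' Ici lam0) := by
    intro t ht
    refine ⟨0, fun x hx => ?_⟩
    obtain ⟨l, hl, rfl⟩ := hx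
    have := hgpos l hl; have := hfpos l hl; have := hΨ₀pos t ht
    positivity
  have hΨle : ∀ t, 0 < t → ∀ l, lam0 ≤ l → Ψ t ≤ g l * Ψ₀ t + c * f l ^ 2 := by
    intro t ht l hl
    rw [hΨ t]
    exact csInf_le (hbdd t ht) ⟨l, hl, rfl⟩
  have hΨnonneg : ∀ t, 0 < t → 0 ≤ Ψ t := by
    intro t ht
    rw [hΨ t]
    apply le_csInf (nonempty_Ici.image _)
    rintro x ⟨l, hl, rfl⟩
    have := hgpos l hl; have := hfpos l hl; have := hΨ₀pos t ht
    positivity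
  refine ⟨hcont, hanti, hbij, ?_, ?_⟩
  · intro δ hδ hδle l hl hTl
    have key : g l * Ψ₀ δ + c * f l ^ 2 = 2 * c * f l ^ 2 := by
      have hgl : g l ≠ 0 := (hgpos l hl).ne'
      rw [← hTl, hΘ l hl]
      field_simp
      ring
    calc Ψ δ ≤ g l * Ψ₀ δ + c * f l ^ 2 := hΨle δ hδ l hl
      _ = 2 * c * f l ^ 2 := key
  · rw [Metric.tendsto_nhdsWithin_nhds]
    intro ε hε
    obtain ⟨L, hL1, hL2⟩ : ∃ L, lam0 ≤ L ∧ c * f L ^ 2 < ε / 2 := by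
      have := (hcf2.eventually_lt_const (by linarith : (0:ℝ) < ε/2)).and
        (eventually_ge_atTop lam0)
      obtain ⟨L, h1, h2⟩ := this.exists
      exact ⟨L, h2, h1⟩
    have hgL := hgpos L hL1
    obtain ⟨d, hd, hdprop⟩ := Metric.tendsto_nhdsWithin_nhds.mp hΨ₀lim
      (ε / (2 * g L)) (by positivity)
    refine ⟨d, hd, ?_⟩
    intro t ht hdist
    have ht' : 0 < t := ht
    have h1 : Ψ₀ t < ε / (2 * g L) := by
      have := hdprop ht hdist
      rw [Real.dist_eq, sub_zero] at this
      exact lt_of_le_of_lt (le_abs_self _) this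
    have h2 : Ψ t ≤ g L * Ψ₀ t + c * f L ^ 2 := hΨle t ht' L hL1
    have h3 : g L * Ψ₀ t < ε / 2 := by
      have := mul_lt_mul_of_pos_left h1 hgL
      calc g L * Ψ₀ t < g L * (ε / (2 * g L)) := this
        _ = ε / 2 := by field_simp
    rw [Real.dist_eq, sub_zero, abs_of_nonneg (hΨnonneg t ht')]
    linarith
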